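/- Let X₁, X₂, X₃ be independent with law U_T. For every r ∈ [2,∞), the probability that both X₂ and X₃ lie in N^r(X₁) equals P(X₂ ∈ N^r(X₁) and X₃ ∈ N^r(X₁)) = 1 − 2·r⁻². -/

import Mathlib

open MeasureTheory Real Set

noncomputable section

/-- The z-component of the cross product of two planar vectors. -/
def cross (u v : ℝ × ℝ) : ℝ := u.1 * v.2 - u.2 * v.1

/-- Barycentric coordinates of `x` with respect to the triangle with
vertices `a`, `b`, `c`. -/
def bary (a b c x : ℝ × ℝ) : Fin 3 → ℝ := fun i =>
  if i = 1 then cross (x - a) (c - a) / cross (b - a) (c - a)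
  else if i = 2 then cross (b - a) (x - a) / cross (b - a) (c - a)
  else 1 - cross (x - a) (c - a) / cross (b - a) (c - a)
    - cross (b - a) (x - a) / cross (b - a) (c - a)

/-- The closed triangle with vertices `a`, `b`, `c` (the set of points with
nonnegative barycentric coordinates). -/
def tri (a b c : ℝ × ℝ) : Set (ℝ × ℝ) := {x | ∀ i : Fin 3, 0 ≤ bary a b c x i}

/-- The least index maximizing the barycentric coordinates of `x`. -/
def jmax (a b c x : ℝ × ℝ) : Fin 3 :=
  if bary a b c x 1 ≤ bary a b c x 0 ∧ bary a b c x 2 ≤ bary a b c x 0 then 0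
  else if bary a b c x 2 ≤ bary a b c x 1 then 1 else 2

/-- The `r`-factor proximity region of `x` in the triangle with vertices `a`, `b`, `c`:
`N^r(x) = {z ∈ T : 1 − β_{j(x)}(z) ≤ r (1 − β_{j(x)}(x))}`. -/
def prox (a b c : ℝ × ℝ) (r : ℝ) (x : ℝ × ℝ) : Set (ℝ × ℝ) :=
  {z | z ∈ tri a b c ∧
    1 - bary a b c z (jmax a b c x) ≤ r * (1 - bary a b c x (jmax a b c x))}

/-- The uniform probability measure on `s ⊆ ℝ²` (normalized Lebesgue measure). -/
def unif (s : Set (ℝ × ℝ)) : Measure (ℝ × ℝ) := (volume s)⁻¹ • volume.restrict s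

def y1 : ℝ × ℝ := (0, 0)
def y2 : ℝ × ℝ := (1, 0)
def y3 : ℝ × ℝ := (1 / 2, Real.sqrt 3 / 2)

/-- The standard equilateral triangle. -/
def T : Set (ℝ × ℝ) := tri y1 y2 y3

/-- The `r`-factor proximity region in the standard triangle. -/
def N (r : ℝ) (x : ℝ × ℝ) : Set (ℝ × ℝ) := prox y1 y2 y3 r x

/-- The null arc probability `μ(r) = P(X₂ ∈ N^r(X₁))` for independent uniform
points in the standard triangle. -/
def mu (r : ℝ) : ℝ := (((unif T).prod (unif T)) {p | p.2 ∈ N r p.1}).toReal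


/-! ### Auxiliary machinery -/

local notation "s3" => Real.sqrt 3

lemma s3_pos : (0:ℝ) < s3 := Real.sqrt_pos.2 (by norm_num)
lemma s3_ne : (s3 : ℝ) ≠ 0 := ne_of_gt s3_pos
lemma s3_sq : s3 * s3 = 3 := Real.mul_self_sqrt (by norm_num)

def psi (x : ℝ × ℝ) : ℝ × ℝ := (x.1 - x.2 / s3, 2 * x.2 / s3)
def phi (x : ℝ × ℝ) : ℝ × ℝ := (x.1 + x.2 / 2, s3 / 2 * x.2)

lemma psi_phi (x : ℝ × ℝ) : psi (phi x) = x := by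
  unfold psi phi
  have h := s3_sq
  ext <;> simp <;> field_simp <;> ring

lemma phi_psi (x : ℝ × ℝ) : phi (psi x) = x := by
  unfold psi phi
  have h3 : s3 * s3 = 3 := s3_sq
  ext <;> simp <;> field_simp <;> nlinarith [h3]

lemma psi_cont : Continuous psi := by unfold psi; fun_prop
lemma phi_cont : Continuous phi := by unfold phi; fun_prop

def psiLin : (ℝ × ℝ) →ₗ[ℝ] (ℝ × ℝ) :=
  Matrix.toLin (Module.Basis.finTwoProd ℝ) (Module.Basis.finTwoProd ℝ) !![1, -(1/s3); 0, 2/s3]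

lemma psiLin_eq : ⇑psiLin = psi := by
  funext x
  simp [psiLin, psi, Matrix.toLin_finTwoProd_apply]
  constructor <;> ring

lemma psiLin_det : LinearMap.det psiLin = 2 / s3 := by
  rw [psiLin, LinearMap.det_toLin, Matrix.det_fin_two_of]
  ring

lemma vol_psi_preimage (A : Set (ℝ × ℝ)) :
    volume (psi ⁻¹' A) = ENNReal.ofReal (s3 / 2) * volume A := by
  have hd : LinearMap.det psiLin ≠ 0 := by
    rw [psiLin_det]; positivity
  have := MeasureTheory.Measure.addHaar_preimage_linearMap (volume : Measure (ℝ × ℝ)) hd A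
  rw [psiLin_eq] at this
  rw [this, psiLin_det]
  congr 1
  rw [abs_of_pos (by positivity)]
  field_simp

lemma bary1_eq (x : ℝ × ℝ) : bary y1 y2 y3 x 1 = (psi x).1 := by
  simp only [bary]
  rw [if_pos trivial]
  simp only [y1, y2, y3, cross, psi]
  norm_num
  field_simp
  try ring

lemma bary2_eq (x : ℝ × ℝ) : bary y1 y2 y3 x 2 = (psi x).2 := by
  simp only [bary]
  rw [if_neg (by decide), if_pos trivial]
  simp only [y1, y2, y3, cross, psi]
  norm_num
  field_simp
  try ring

lemma bary0_eq (x : ℝ × ℝ) : bary y1 y2 y3 x 0 = 1 - (psi x).1 - (psi x).2 := by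
  simp only [bary]
  rw [if_neg (by decide), if_neg (by decide)]
  simp only [y1, y2, y3, cross, psi]
  norm_num
  field_simp
  try ring

def Sset (a b : ℝ) : Set (ℝ × ℝ) := {p | a ≤ p.1 ∧ 0 ≤ p.2 ∧ p.1 + p.2 ≤ b}

lemma Sset_closed (a b : ℝ) : IsClosed (Sset a b) := by
  have h1 : IsClosed {p : ℝ × ℝ | a ≤ p.1} := isClosed_le continuous_const continuous_fst
  have h2 : IsClosed {p : ℝ × ℝ | 0 ≤ p.2} := isClosed_le continuous_const continuous_snd
  have h3 : IsClosed {p : ℝ × ℝ | p.1 + p.2 ≤ b} :=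
    isClosed_le (continuous_fst.add continuous_snd) continuous_const
  exact (h1.inter (h2.inter h3))

lemma Sset_compact (a b : ℝ) : IsCompact (Sset a b) := by
  rcases le_or_gt a b with hab | hab
  · refine IsCompact.of_isClosed_subset (isCompact_Icc (a := (a, 0)) (b := (b, b - a)))
      (Sset_closed a b) ?_
    rintro ⟨u, v⟩ ⟨h1, h2, h3⟩
    simp only at h1 h2 h3
    simp only [mem_Icc, Prod.le_def]
    exact ⟨⟨h1, h2⟩, ⟨by linarith, by linarith⟩⟩
  · convert isCompact_empty
    ext ⟨u, v⟩
    simp only [Sset, mem_setOf_eq, mem_empty_iff_false, iff_false, not_and]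
    intro h1 h2
    linarith

lemma fub (a b : ℝ) (hab : a ≤ b) (h : ℝ × ℝ → ℝ) (hc : Continuous h) :
    ∫ p in Sset a b, h p = ∫ u in a..b, ∫ v in (0:ℝ)..(b-u), h (u, v) := by
  have hSm : MeasurableSet (Sset a b) := (Sset_closed a b).measurableSet
  have hInt : IntegrableOn h (Sset a b) := hc.continuousOn.integrableOn_compact (Sset_compact a b)
  have hIndInt : Integrable ((Sset a b).indicator h) volume := hInt.integrable_indicator hSm
  rw [← integral_indicator hSm]
  rw [Measure.volume_eq_prod] at hIndInt ⊢
  rw [MeasureTheory.integral_prod _ hIndInt]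
  have key : ∀ u : ℝ, (∫ v, (Sset a b).indicator h (u, v)) =
      (Icc a b).indicator (fun u => ∫ v in (0:ℝ)..(b-u), h (u, v)) u := by
    intro u
    by_cases hu : a ≤ u
    · by_cases hub : u ≤ b
      · have hslice : (fun v => (Sset a b).indicator h (u, v)) =
            (Icc 0 (b-u)).indicator (fun v => h (u, v)) := by
          funext v
          by_cases hv : v ∈ Icc 0 (b - u)
          · rw [indicator_of_mem hv]
            have : (u, v) ∈ Sset a b := ⟨hu, hv.1, by have := hv.2; simp only at *; linarith⟩
            rw [indicator_of_mem this]
          · rw [indicator_of_notMem hv, indicator_of_notMem]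
            intro hmem
            exact hv ⟨hmem.2.1, by have := hmem.2.2; simp only [mem_Icc] at *; linarith⟩
        rw [hslice, integral_indicator measurableSet_Icc,
          MeasureTheory.integral_Icc_eq_integral_Ioc,
          ← intervalIntegral.integral_of_le (by linarith : (0:ℝ) ≤ b - u),
          indicator_of_mem (mem_Icc.2 ⟨hu, hub⟩)]
      · have hz : (fun v => (Sset a b).indicator h (u, v)) = fun _ => 0 := by
          funext v
          rw [indicator_of_notMem]
          rintro ⟨-, h2, h3⟩
          simp only at h2 h3
          push_neg at hub
          linarith
        rw [hz, integral_zero, indicator_of_notMem]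
        simp only [mem_Icc, not_and]; intro; intro h'; exact hub h'
    · have hz : (fun v => (Sset a b).indicator h (u, v)) = fun _ => 0 := by
        funext v
        rw [indicator_of_notMem]
        rintro ⟨h1, -, -⟩
        exact hu h1
      rw [hz, integral_zero, indicator_of_notMem]
      simp only [mem_Icc, not_and]
      intro h'; exact absurd h' hu
  calc (∫ u, ∫ v, (Sset a b).indicator h (u, v)) =
      ∫ u, (Icc a b).indicator (fun u => ∫ v in (0:ℝ)..(b-u), h (u, v)) u :=
        integral_congr_ae (Filter.Eventually.of_forall key)
    _ = ∫ u in Icc a b, ∫ v in (0:ℝ)..(b-u), h (u, v) := integral_indicator measurableSet_Icc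
    _ = ∫ u in a..b, ∫ v in (0:ℝ)..(b-u), h (u, v) := by
        rw [MeasureTheory.integral_Icc_eq_integral_Ioc,
          ← intervalIntegral.integral_of_le hab]

lemma int_one_sub_pow (c : ℝ) (n : ℕ) :
    ∫ u in c..(1:ℝ), (1-u)^n = (1-c)^(n+1)/(n+1) := by
  have h : ∫ u in c..(1:ℝ), (1-u)^n = ∫ x in (1-(1:ℝ))..(1-c), x^n :=
    intervalIntegral.integral_comp_sub_left (fun t : ℝ => t^n) 1
  rw [h, integral_pow]
  norm_num

lemma integral_slope (a b : ℝ) : ∫ u in a..b, (b - u) = (b-a)^2/2 := by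
  rw [intervalIntegral.integral_sub (continuous_const.intervalIntegrable _ _)
    (intervalIntegral.intervalIntegrable_id), intervalIntegral.integral_const,
    integral_id]
  simp
  ring

lemma vol_Sset (a b : ℝ) (hab : a ≤ b) :
    volume (Sset a b) = ENNReal.ofReal ((b-a)^2/2) := by
  have h1 : ∫ p in Sset a b, (1:ℝ) = (b-a)^2/2 := by
    rw [fub a b hab _ continuous_const]
    have : ∀ u ∈ Set.uIcc a b, (∫ v in (0:ℝ)..(b-u), (1:ℝ)) = b - u := by
      intro u _; rw [intervalIntegral.integral_const]; simp
    rw [intervalIntegral.integral_congr this]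
    exact integral_slope a b
  rw [setIntegral_const, smul_eq_mul, mul_one] at h1
  rw [← h1, measureReal_def, ENNReal.ofReal_toReal ((Sset_compact a b).measure_lt_top.ne)]

lemma int_C1 (c r : ℝ) (hc : c ≤ 1) :
    ∫ p in Sset c 1, (1 - (r*(1-p.1))^4) = (1-c)^2/2 - r^4*(1-c)^6/6 := by
  have hcont : Continuous (fun p : ℝ × ℝ => 1 - (r*(1-p.1))^4) := by fun_prop
  rw [fub c 1 hc _ hcont]
  have h1 : ∀ u ∈ Set.uIcc c (1:ℝ), (∫ v in (0:ℝ)..(1-u), (1 - (r*(1-u))^4))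
      = (1-u)^1 - r^4*(1-u)^5 := by
    intro u _; rw [intervalIntegral.integral_const]; simp; ring
  rw [intervalIntegral.integral_congr h1,
    intervalIntegral.integral_sub ((by fun_prop : Continuous fun u : ℝ => (1-u)^1).intervalIntegrable _ _)
      ((by fun_prop : Continuous fun u : ℝ => r^4*(1-u)^5).intervalIntegrable _ _),
    intervalIntegral.integral_const_mul, int_one_sub_pow, int_one_sub_pow]
  norm_num
  ring

lemma int_C0 (w r : ℝ) (hw : 0 ≤ w) :
    ∫ p in Sset 0 w, (1 - (r*(p.1+p.2))^4) = w^2/2 - r^4*w^6/6 := by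
  have hcont : Continuous (fun p : ℝ × ℝ => 1 - (r*(p.1+p.2))^4) := by fun_prop
  rw [fub 0 w hw _ hcont]
  have h1 : ∀ u ∈ Set.uIcc (0:ℝ) w, (∫ v in (0:ℝ)..(w-u), (1 - (r*(u+v))^4))
      = (w-u) - r^4*((w^5-u^5)/5) := by
    intro u _
    have ha : ∫ v in (0:ℝ)..(w-u), (1 - (r*(u+v))^4)
        = ∫ v in (0:ℝ)..(w-u), ((1:ℝ) - r^4*(u+v)^4) := by
      refine intervalIntegral.integral_congr (fun v _ => ?_); ring
    have hb : ∫ v in (0:ℝ)..(w-u), (u+v)^4 = ∫ t in (u+(0:ℝ))..(u+(w-u)), t^4 :=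
      intervalIntegral.integral_comp_add_left (fun t : ℝ => t^4) u
    rw [ha, intervalIntegral.integral_sub (continuous_const.intervalIntegrable _ _)
      ((by fun_prop : Continuous fun v : ℝ => r^4*(u+v)^4).intervalIntegrable _ _),
      intervalIntegral.integral_const, intervalIntegral.integral_const_mul, hb,
      show u + (0:ℝ) = u by ring, show u + (w - u) = w by ring, integral_pow]
    norm_num
  rw [intervalIntegral.integral_congr h1,
    intervalIntegral.integral_sub ((by fun_prop : Continuous fun u : ℝ => w-u).intervalIntegrable _ _)
      ((by fun_prop : Continuous fun u : ℝ => r^4*((w^5-u^5)/5)).intervalIntegrable _ _),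
    integral_slope]
  have h3 : ∫ u in (0:ℝ)..w, r^4*((w^5-u^5)/5) = r^4/5 * ∫ u in (0:ℝ)..w, (w^5-u^5) := by
    rw [← intervalIntegral.integral_const_mul]
    refine intervalIntegral.integral_congr (fun u _ => ?_); ring
  have h4 : ∫ u in (0:ℝ)..w, (w^5-u^5) = w^6 - w^6/6 := by
    rw [intervalIntegral.integral_sub (continuous_const.intervalIntegrable _ _)
      ((continuous_pow 5).intervalIntegrable _ _),
      intervalIntegral.integral_const, integral_pow]
    simp
    ring
  rw [h3, h4]
  ring

/-! ### The triangle and barycentric coordinates -/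

lemma mem_T_iff (x : ℝ × ℝ) : x ∈ T ↔ psi x ∈ Sset 0 1 := by
  constructor
  · intro hx
    have h0 := hx 0
    have h1 := hx 1
    have h2 := hx 2
    rw [bary0_eq] at h0
    rw [bary1_eq] at h1
    rw [bary2_eq] at h2
    exact ⟨h1, h2, by linarith⟩
  · rintro ⟨h1, h2, h3⟩
    intro i
    fin_cases i
    · rw [show (⟨0, by norm_num⟩ : Fin 3) = 0 from rfl, bary0_eq]; linarith
    · rw [show (⟨1, by norm_num⟩ : Fin 3) = 1 from rfl, bary1_eq]; linarith
    · rw [show (⟨2, by norm_num⟩ : Fin 3) = 2 from rfl, bary2_eq]; linarith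

lemma T_eq_preimage : T = psi ⁻¹' Sset 0 1 := by
  ext x; exact mem_T_iff x

lemma T_closed : IsClosed T := by
  rw [T_eq_preimage]; exact (Sset_closed 0 1).preimage psi_cont

lemma T_meas : MeasurableSet T := T_closed.measurableSet

lemma T_compact : IsCompact T := by
  have : T = phi '' Sset 0 1 := by
    rw [T_eq_preimage]
    ext x
    constructor
    · intro hx; exact ⟨psi x, hx, phi_psi x⟩
    · rintro ⟨p, hp, rfl⟩; simpa [psi_phi] using hp
  rw [this]
  exact ((Sset_compact 0 1).image phi_cont)

lemma vol_T : volume T = ENNReal.ofReal (s3/4) := by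
  rw [T_eq_preimage, vol_psi_preimage, vol_Sset 0 1 zero_le_one,
    ← ENNReal.ofReal_mul (by positivity)]
  norm_num
  congr 1
  ring

lemma unif_T_prob : IsProbabilityMeasure (unif T) := by
  constructor
  rw [unif, Measure.smul_apply, Measure.restrict_apply MeasurableSet.univ, univ_inter,
    smul_eq_mul, vol_T]
  exact ENNReal.inv_mul_cancel (ENNReal.ofReal_pos.2 (by positivity)).ne'
    ENNReal.ofReal_ne_top

lemma bary_cont (j : Fin 3) : Continuous fun z => bary y1 y2 y3 z j := by
  have h0 : (fun z => bary y1 y2 y3 z 0) = fun z => 1 - (psi z).1 - (psi z).2 :=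
    funext fun z => bary0_eq z
  have h1 : (fun z => bary y1 y2 y3 z 1) = fun z => (psi z).1 := funext fun z => bary1_eq z
  have h2 : (fun z => bary y1 y2 y3 z 2) = fun z => (psi z).2 := funext fun z => bary2_eq z
  have hps := psi_cont
  fin_cases j
  · rw [show (⟨0, by norm_num⟩ : Fin 3) = 0 from rfl, h0]; fun_prop
  · rw [show (⟨1, by norm_num⟩ : Fin 3) = 1 from rfl, h1]; fun_prop
  · rw [show (⟨2, by norm_num⟩ : Fin 3) = 2 from rfl, h2]; fun_prop

def Msup (x : ℝ × ℝ) : ℝ :=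
  bary y1 y2 y3 x 0 ⊔ bary y1 y2 y3 x 1 ⊔ bary y1 y2 y3 x 2

lemma Msup_cont : Continuous Msup :=
  ((bary_cont 0).max (bary_cont 1)).max (bary_cont 2)

lemma jmax_bary (x : ℝ × ℝ) : bary y1 y2 y3 x (jmax y1 y2 y3 x) = Msup x := by
  set b0 := bary y1 y2 y3 x 0
  set b1 := bary y1 y2 y3 x 1
  set b2 := bary y1 y2 y3 x 2
  rw [jmax, Msup]
  split_ifs with h1 h2
  · rw [sup_of_le_left h1.1, sup_of_le_left h1.2]
  · push_neg at h1
    have hb0b1 : b0 ≤ b1 := by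
      by_cases hb : b1 ≤ b0
      · have := h1 hb; linarith
      · linarith [le_of_not_ge hb]
    rw [sup_of_le_right hb0b1, sup_of_le_left h2]
  · push_neg at h1 h2
    have hb0 : b0 ≤ b2 := by
      by_cases hb : b1 ≤ b0
      · exact le_of_lt (h1 hb)
      · linarith [le_of_not_ge hb, le_of_lt h2]
    rw [sup_of_le_right (sup_le hb0 (le_of_lt h2))]

lemma Msup_le_one (x : ℝ × ℝ) (hx : x ∈ T) : Msup x ≤ 1 := by
  have h0 := hx 0
  have h1 := hx 1
  have h2 := hx 2
  rw [bary0_eq] at h0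
  rw [bary1_eq] at h1
  rw [bary2_eq] at h2
  rw [Msup, bary0_eq, bary1_eq, bary2_eq]
  refine sup_le (sup_le ?_ ?_) ?_ <;> linarith

/-! ### Volume of sub-level sets of barycentric coordinates -/

lemma vol_swap_preimage (A : Set (ℝ × ℝ)) (hA : MeasurableSet A) :
    volume (Prod.swap ⁻¹' A) = volume A := by
  have h : MeasurePreserving (Prod.swap : ℝ × ℝ → ℝ × ℝ)
      ((volume : Measure ℝ).prod volume) ((volume : Measure ℝ).prod volume) :=
    Measure.measurePreserving_swap
  rw [← Measure.volume_eq_prod] at h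
  exact h.measure_preimage hA.nullMeasurableSet

lemma vol_bary_level (j : Fin 3) (c : ℝ) (hc0 : 0 ≤ c) (hc1 : c ≤ 1) :
    volume {z | z ∈ T ∧ c ≤ bary y1 y2 y3 z j}
      = ENNReal.ofReal (s3/4 * (1-c)^2) := by
  fin_cases j
  · have hset : {z | z ∈ T ∧ c ≤ bary y1 y2 y3 z 0} = psi ⁻¹' Sset 0 (1-c) := by
      ext z
      rw [mem_setOf_eq, mem_T_iff, bary0_eq]
      constructor
      · rintro ⟨⟨ha, hb, hd⟩, he⟩; exact ⟨ha, hb, by linarith⟩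
      · rintro ⟨ha, hb, hd⟩
        exact ⟨⟨ha, hb, by linarith⟩, by linarith⟩
    rw [show ((⟨0, by norm_num⟩ : Fin 3)) = 0 from rfl] at *
    rw [hset, vol_psi_preimage, vol_Sset 0 (1-c) (by linarith),
      ← ENNReal.ofReal_mul (by positivity)]
    congr 1; ring
  · have hset : {z | z ∈ T ∧ c ≤ bary y1 y2 y3 z 1} = psi ⁻¹' Sset c 1 := by
      ext z
      rw [mem_setOf_eq, mem_T_iff, bary1_eq]
      constructor
      · rintro ⟨⟨ha, hb, hd⟩, he⟩; exact ⟨he, hb, hd⟩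
      · rintro ⟨ha, hb, hd⟩
        exact ⟨⟨by linarith, hb, hd⟩, ha⟩
    rw [show ((⟨1, by norm_num⟩ : Fin 3)) = 1 from rfl] at *
    rw [hset, vol_psi_preimage, vol_Sset c 1 (by linarith),
      ← ENNReal.ofReal_mul (by positivity)]
    congr 1; ring
  · have hset : {z | z ∈ T ∧ c ≤ bary y1 y2 y3 z 2}
        = psi ⁻¹' (Prod.swap ⁻¹' Sset c 1) := by
      ext z
      rw [mem_setOf_eq, mem_T_iff, bary2_eq]
      constructor
      · rintro ⟨⟨ha, hb, hd⟩, he⟩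
        exact ⟨he, ha, by simp only [Prod.fst_swap, Prod.snd_swap]; linarith⟩
      · rintro ⟨ha, hb, hd⟩
        simp only [Prod.fst_swap, Prod.snd_swap] at ha hb hd
        exact ⟨⟨hb, by linarith, by linarith⟩, ha⟩
    rw [show ((⟨2, by norm_num⟩ : Fin 3)) = 2 from rfl] at *
    rw [hset, vol_psi_preimage,
      vol_swap_preimage _ (Sset_closed c 1).measurableSet, vol_Sset c 1 (by linarith),
      ← ENNReal.ofReal_mul (by positivity)]
    congr 1; ring

lemma N_meas (r : ℝ) (x : ℝ × ℝ) : MeasurableSet (N r x) := by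
  have heq : N r x = T ∩ {z | 1 - bary y1 y2 y3 z (jmax y1 y2 y3 x)
      ≤ r * (1 - bary y1 y2 y3 x (jmax y1 y2 y3 x))} := rfl
  rw [heq]
  exact (T_closed.inter (isClosed_le
    (continuous_const.sub (bary_cont (jmax y1 y2 y3 x))) continuous_const)).measurableSet

lemma N_subset_T (r : ℝ) (x : ℝ × ℝ) : N r x ⊆ T := fun z hz => hz.1

lemma unif_T_T : unif T T = 1 := by
  rw [unif, Measure.smul_apply, Measure.restrict_apply T_meas, inter_self,
    smul_eq_mul, vol_T]
  exact ENNReal.inv_mul_cancel (ENNReal.ofReal_pos.2 (by positivity)).ne'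
    ENNReal.ofReal_ne_top

lemma unif_N (r : ℝ) (hr : 1 ≤ r) (x : ℝ × ℝ) (hx : x ∈ T) :
    unif T (N r x) = ENNReal.ofReal (min (r * (1 - Msup x)) 1 ^ 2) := by
  have hM1 : Msup x ≤ 1 := Msup_le_one x hx
  have hM0 : 0 ≤ 1 - Msup x := by linarith
  have hr0 : (0:ℝ) < r := by linarith
  by_cases hbig : 1 ≤ r * (1 - Msup x)
  · have hNT : N r x = T := by
      ext z
      constructor
      · exact fun hz => hz.1
      · intro hz
        refine ⟨hz, ?_⟩
        have hb : 0 ≤ bary y1 y2 y3 z (jmax y1 y2 y3 x) := hz _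
        rw [jmax_bary]
        linarith
    rw [hNT, unif_T_T, min_eq_right hbig]
    norm_num
  · push_neg at hbig
    set c := 1 - r * (1 - Msup x) with hcdef
    have hc0 : 0 ≤ c := by simp only [hcdef]; linarith
    have hc1 : c ≤ 1 := by
      simp only [hcdef]
      nlinarith
    have hNeq : N r x = {z | z ∈ T ∧ c ≤ bary y1 y2 y3 z (jmax y1 y2 y3 x)} := by
      ext z
      unfold N prox
      rw [mem_setOf_eq, mem_setOf_eq, jmax_bary]
      constructor
      · rintro ⟨hz, hi⟩; exact ⟨hz, by simp only [hcdef]; linarith⟩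
      · rintro ⟨hz, hi⟩
        refine ⟨hz, ?_⟩
        simp only [hcdef] at hi
        linarith
    rw [hNeq, unif, Measure.smul_apply, Measure.restrict_apply, smul_eq_mul]
    · have hsub : {z | z ∈ T ∧ c ≤ bary y1 y2 y3 z (jmax y1 y2 y3 x)} ∩ T
          = {z | z ∈ T ∧ c ≤ bary y1 y2 y3 z (jmax y1 y2 y3 x)} :=
        inter_eq_left.2 (fun z hz => hz.1)
      rw [hsub, vol_bary_level _ c hc0 hc1, vol_T,
        ← ENNReal.ofReal_inv_of_pos (by positivity),
        ← ENNReal.ofReal_mul (by positivity)]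
      congr 1
      have hceq : 1 - c = r * (1 - Msup x) := by simp only [hcdef]; ring
      rw [min_eq_left (le_of_lt hbig), ← hceq]
      have hs3 : (0:ℝ) < s3 := s3_pos
      field_simp
    · refine (T_closed.inter (isClosed_le continuous_const
        (bary_cont (jmax y1 y2 y3 x)))).measurableSet

/-! ### Transfer of integrals from T to the simplex -/

lemma map_psi_volume : Measure.map psi volume = ENNReal.ofReal (s3/2) • volume := by
  refine Measure.ext fun A hA => ?_
  rw [Measure.map_apply psi_cont.measurable hA, vol_psi_preimage, Measure.smul_apply,
    smul_eq_mul]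

lemma integral_T_transfer (g : ℝ × ℝ → ℝ) (hg : Continuous g) :
    ∫ x in T, g x = (s3/2) * ∫ p in Sset 0 1, g (phi p) := by
  have hΔm : MeasurableSet (Sset 0 1) := (Sset_closed 0 1).measurableSet
  have hind : (Sset 0 1).indicator (fun p => g (phi p)) ∘ psi = T.indicator g := by
    funext x
    by_cases hx : x ∈ T
    · rw [Function.comp_apply, indicator_of_mem hx,
        indicator_of_mem ((mem_T_iff x).1 hx), phi_psi]
    · rw [Function.comp_apply, indicator_of_notMem hx, indicator_of_notMem]
      intro hmem
      exact hx ((mem_T_iff x).2 hmem)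
  have hsm : AEStronglyMeasurable ((Sset 0 1).indicator fun p => g (phi p))
      (Measure.map psi volume) :=
    (((hg.comp phi_cont).stronglyMeasurable).indicator hΔm).aestronglyMeasurable
  have h1 : ∫ p, (Sset 0 1).indicator (fun p => g (phi p)) p ∂(Measure.map psi volume)
      = ∫ x, ((Sset 0 1).indicator (fun p => g (phi p)) ∘ psi) x :=
    integral_map psi_cont.measurable.aemeasurable hsm
  rw [hind] at h1
  rw [← integral_indicator T_meas, ← h1, map_psi_volume, integral_smul_measure,
    integral_indicator hΔm]
  simp only [smul_eq_mul]
  congr 1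
  rw [ENNReal.toReal_ofReal (by positivity)]

/-! ### Pointwise identity on the simplex -/

lemma GG_pointwise (r : ℝ) (hr : 2 ≤ r) (p : ℝ × ℝ) (hp : p ∈ Sset 0 1)
    (h1 : p.1 ≠ 1 - r⁻¹) (h2 : p.2 ≠ 1 - r⁻¹) (h0 : p.1 + p.2 ≠ r⁻¹) :
    min (r * (1 - ((1 - p.1 - p.2) ⊔ p.1 ⊔ p.2))) 1 ^ 4
      = 1 - ((Sset 0 r⁻¹).indicator (fun q => 1 - (r*(q.1+q.2))^4) p
           + (Sset (1-r⁻¹) 1).indicator (fun q => 1 - (r*(1-q.1))^4) p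
           + (Prod.swap ⁻¹' Sset (1-r⁻¹) 1).indicator (fun q => 1 - (r*(1-q.2))^4) p) := by
  obtain ⟨hu0, hv0, huv⟩ := hp
  set u := p.1
  set v := p.2
  have hr0 : (0:ℝ) < r := by linarith
  have hrr : r * r⁻¹ = 1 := mul_inv_cancel₀ (ne_of_gt hr0)
  have hinv2 : r⁻¹ ≤ 1/2 := by
    rw [inv_le_comm₀ hr0 (by norm_num)]
    linarith
  set c := 1 - r⁻¹ with hcdef
  have hc12 : 1/2 ≤ c := by simp only [hcdef]; linarith
  have hmem0 : p ∈ Sset 0 r⁻¹ ↔ u + v ≤ r⁻¹ := by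
    constructor
    · exact fun h => h.2.2
    · exact fun h => ⟨hu0, hv0, h⟩
  have hmem1 : p ∈ Sset c 1 ↔ c ≤ u := by
    constructor
    · exact fun h => h.1
    · exact fun h => ⟨h, hv0, huv⟩
  have hmem2 : p ∈ Prod.swap ⁻¹' Sset c 1 ↔ c ≤ v := by
    constructor
    · exact fun h => h.1
    · intro h
      exact ⟨h, hu0, by simp only [Prod.fst_swap, Prod.snd_swap]; linarith⟩
  set b0 := 1 - u - v with hb0
  clear_value c b0
  by_cases hcase0 : c < b0
  · -- the β₀ corner
    have hub : u ≤ b0 := by linarith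
    have hvb : v ≤ b0 := by linarith
    have hM : b0 ⊔ u ⊔ v = b0 := by
      rw [sup_of_le_left (hvb.trans le_sup_left), sup_of_le_left hub]
    have hin0 : p ∈ Sset 0 r⁻¹ := hmem0.2 (by simp only [hcdef] at hcase0; linarith)
    have hout1 : p ∉ Sset c 1 := fun h => by have := hmem1.1 h; simp only [hb0] at hcase0; linarith
    have hout2 : p ∉ Prod.swap ⁻¹' Sset c 1 := fun h => by
      have := hmem2.1 h; simp only [hb0] at hcase0; linarith
    rw [hM, indicator_of_mem hin0, indicator_of_notMem hout1, indicator_of_notMem hout2,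
      min_eq_left]
    · have : 1 - b0 = u + v := by simp only [hb0]; ring
      rw [this]; ring
    · have h1b0 : 1 - b0 < r⁻¹ := by simp only [hcdef] at hcase0; linarith
      nlinarith
  · by_cases hcase1 : c < u
    · -- the β₁ corner
      have hbu : b0 ≤ u := by linarith
      have hvu : v ≤ u := by linarith
      have hM : b0 ⊔ u ⊔ v = u := by
        rw [sup_of_le_left (hvu.trans le_sup_right), sup_of_le_right hbu]
      have hout0 : p ∉ Sset 0 r⁻¹ := fun h => by
        have := hmem0.1 h; simp only [hcdef] at hcase1; linarith
      have hin1 : p ∈ Sset c 1 := hmem1.2 (le_of_lt hcase1)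
      have hout2 : p ∉ Prod.swap ⁻¹' Sset c 1 := fun h => by
        have := hmem2.1 h; linarith
      rw [hM, indicator_of_notMem hout0, indicator_of_mem hin1, indicator_of_notMem hout2,
        min_eq_left]
      · ring
      · have : 1 - u < r⁻¹ := by simp only [hcdef] at hcase1; linarith
        nlinarith
    · by_cases hcase2 : c < v
      · -- the β₂ corner
        have hbv : b0 ≤ v := by linarith
        have huv2 : u ≤ v := by linarith
        have hM : b0 ⊔ u ⊔ v = v := sup_of_le_right (sup_le hbv huv2)
        have hout0 : p ∉ Sset 0 r⁻¹ := fun h => by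
          have := hmem0.1 h; simp only [hcdef] at hcase2; linarith
        have hout1 : p ∉ Sset c 1 := fun h => by
          have := hmem1.1 h; linarith
        have hin2 : p ∈ Prod.swap ⁻¹' Sset c 1 := hmem2.2 (le_of_lt hcase2)
        rw [hM, indicator_of_notMem hout0, indicator_of_notMem hout1, indicator_of_mem hin2,
          min_eq_left]
        · ring
        · have : 1 - v < r⁻¹ := by simp only [hcdef] at hcase2; linarith
          nlinarith
      · -- the central region
        push_neg at hcase0 hcase1 hcase2
        have hb0c : b0 < c := lt_of_le_of_ne hcase0 (by
          simp only [hb0, hcdef]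
          intro hcon
          exact h0 (by linarith))
        have huc : u < c := lt_of_le_of_ne hcase1 (by
          intro hcon
          exact h1 (by simp only [hcdef] at hcon ⊢; linarith))
        have hvc : v < c := lt_of_le_of_ne hcase2 (by
          intro hcon
          exact h2 (by simp only [hcdef] at hcon ⊢; linarith))
        have hout0 : p ∉ Sset 0 r⁻¹ := fun h => by
          have := hmem0.1 h; simp only [hb0, hcdef] at hb0c; linarith
        have hout1 : p ∉ Sset c 1 := fun h => by have := hmem1.1 h; linarith
        have hout2 : p ∉ Prod.swap ⁻¹' Sset c 1 := fun h => by
          have := hmem2.1 h; linarith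
        have hMlt : b0 ⊔ u ⊔ v < c := by
          refine max_lt (max_lt hb0c huc) hvc
        have hge : 1 ≤ r * (1 - (b0 ⊔ u ⊔ v)) := by
          have h1c : r * (1 - c) = 1 := by
            simp only [hcdef]; rw [show 1 - (1 - r⁻¹) = r⁻¹ by ring, hrr]
          nlinarith
        rw [min_eq_right hge, indicator_of_notMem hout0, indicator_of_notMem hout1,
          indicator_of_notMem hout2]
        norm_num

/-! ### Null lines -/

lemma null_line_fst (k : ℝ) : volume {p : ℝ × ℝ | p.1 = k} = 0 := by
  have : {p : ℝ × ℝ | p.1 = k} = ({k} : Set ℝ) ×ˢ (univ : Set ℝ) := by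
    ext ⟨a, b⟩; simp [Set.mem_prod, eq_comm]
  rw [this, Measure.volume_eq_prod, Measure.prod_prod]
  simp

lemma null_line_snd (k : ℝ) : volume {p : ℝ × ℝ | p.2 = k} = 0 := by
  have : {p : ℝ × ℝ | p.2 = k} = (univ : Set ℝ) ×ˢ ({k} : Set ℝ) := by
    ext ⟨a, b⟩; simp [Set.mem_prod, eq_comm]
  rw [this, Measure.volume_eq_prod, Measure.prod_prod]
  simp

lemma null_line_sum (k : ℝ) : volume {p : ℝ × ℝ | p.1 + p.2 = k} = 0 := by
  have hmeas : MeasurableSet {p : ℝ × ℝ | p.1 + p.2 = k} :=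
    (isClosed_eq (continuous_fst.add continuous_snd) continuous_const).measurableSet
  rw [Measure.volume_eq_prod, Measure.prod_apply hmeas]
  have : ∀ u : ℝ, (volume (Prod.mk u ⁻¹' {p : ℝ × ℝ | p.1 + p.2 = k})) = 0 := by
    intro u
    have : Prod.mk u ⁻¹' {p : ℝ × ℝ | p.1 + p.2 = k} = {k - u} := by
      ext v; simp; constructor <;> intro h <;> linarith
    rw [this]
    exact measure_singleton _
  simp only [this]
  exact lintegral_zero

/-! ### The simplex integral -/

lemma int_Delta (r : ℝ) (hr : 2 ≤ r) :
    ∫ p in Sset 0 1, min (r * (1 - ((1 - p.1 - p.2) ⊔ p.1 ⊔ p.2))) 1 ^ 4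
      = 1/2 - (r^2)⁻¹ := by
  have hr0 : (0:ℝ) < r := by linarith
  have hinv2 : r⁻¹ ≤ 1/2 := by
    rw [inv_le_comm₀ hr0 (by norm_num)]
    linarith
  have hinv0 : (0:ℝ) < r⁻¹ := by positivity
  set c := 1 - r⁻¹ with hcdef
  have hc0 : 0 ≤ c := by simp only [hcdef]; linarith
  have hc1 : c ≤ 1 := by simp only [hcdef]; linarith
  set f0 : ℝ × ℝ → ℝ := fun q => 1 - (r*(q.1+q.2))^4 with hf0
  set f1 : ℝ × ℝ → ℝ := fun q => 1 - (r*(1-q.1))^4 with hf1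
  set f2 : ℝ × ℝ → ℝ := fun q => 1 - (r*(1-q.2))^4 with hf2
  set C0 := Sset 0 r⁻¹ with hC0
  set C1 := Sset c 1 with hC1
  set C2 := Prod.swap ⁻¹' Sset c 1 with hC2
  have hC0m : MeasurableSet C0 := (Sset_closed _ _).measurableSet
  have hC1m : MeasurableSet C1 := (Sset_closed _ _).measurableSet
  have hC2m : MeasurableSet C2 :=
    (Sset_closed c 1).measurableSet.preimage measurable_swap
  have hΔm : MeasurableSet (Sset 0 1) := (Sset_closed 0 1).measurableSet
  -- a.e. rewrite
  have hbad : volume ({p : ℝ × ℝ | p.1 = c} ∪ {p : ℝ × ℝ | p.2 = c}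
      ∪ {p : ℝ × ℝ | p.1 + p.2 = r⁻¹}) = 0 := by
    refine le_antisymm ?_ zero_le
    refine le_trans (measure_union_le _ _) ?_
    rw [null_line_sum]
    refine le_trans (add_le_add_left (measure_union_le _ _) 0) ?_
    rw [null_line_fst, null_line_snd]
    simp
  have hae : ∀ᵐ p : ℝ × ℝ, p ∈ Sset 0 1 →
      min (r * (1 - ((1 - p.1 - p.2) ⊔ p.1 ⊔ p.2))) 1 ^ 4
        = 1 - (C0.indicator f0 p + C1.indicator f1 p + C2.indicator f2 p) := by
    have hnm := (measure_eq_zero_iff_ae_notMem.1 hbad)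
    filter_upwards [hnm] with p hout hp
    simp only [mem_union, not_or, mem_setOf_eq] at hout
    exact GG_pointwise r hr p hp hout.1.1 hout.1.2 hout.2
  rw [setIntegral_congr_ae hΔm hae]
  -- integrability
  have hci : ∀ (g : ℝ × ℝ → ℝ) (C : Set (ℝ × ℝ)), Continuous g → MeasurableSet C →
      IsCompact C → Integrable (C.indicator g) (volume.restrict (Sset 0 1)) := by
    intro g C hg hCm hCc
    exact ((hg.continuousOn.integrableOn_compact hCc).integrable_indicator hCm).restrict
  have hi0 : Integrable (C0.indicator f0) (volume.restrict (Sset 0 1)) :=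
    hci f0 C0 (by simp only [hf0]; fun_prop) hC0m (Sset_compact _ _)
  have hi1 : Integrable (C1.indicator f1) (volume.restrict (Sset 0 1)) :=
    hci f1 C1 (by simp only [hf1]; fun_prop) hC1m (Sset_compact _ _)
  have hi2 : Integrable (C2.indicator f2) (volume.restrict (Sset 0 1)) := by
    refine hci f2 C2 (by simp only [hf2]; fun_prop) hC2m ?_
    have : C2 = Prod.swap '' (Sset c 1) := by
      rw [hC2, ← Set.image_swap_eq_preimage_swap]
    rw [this]
    exact (Sset_compact c 1).image continuous_swap
  haveI : IsFiniteMeasure (volume.restrict (Sset 0 1)) :=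
    ⟨by rw [Measure.restrict_apply_univ]; exact (Sset_compact 0 1).measure_lt_top⟩
  have hsum2 : Integrable (fun p => C0.indicator f0 p + C1.indicator f1 p)
      (volume.restrict (Sset 0 1)) := hi0.add hi1
  have hsum3 : Integrable (fun p => C0.indicator f0 p + C1.indicator f1 p + C2.indicator f2 p)
      (volume.restrict (Sset 0 1)) := hsum2.add hi2
  have key : ∫ p in Sset 0 1,
      (1 - (C0.indicator f0 p + C1.indicator f1 p + C2.indicator f2 p))
      = (∫ p in Sset 0 1, (1:ℝ))
        - ((∫ p in Sset 0 1, C0.indicator f0 p) + (∫ p in Sset 0 1, C1.indicator f1 p)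
          + (∫ p in Sset 0 1, C2.indicator f2 p)) := by
    rw [integral_sub (integrable_const 1) hsum3, integral_add hsum2 hi2, integral_add hi0 hi1]
  rw [key]
  have hvol1 : ∫ p in Sset 0 1, (1:ℝ) = 1/2 := by
    rw [setIntegral_const, smul_eq_mul, mul_one, measureReal_def, vol_Sset 0 1 zero_le_one,
      ENNReal.toReal_ofReal (by norm_num)]
    norm_num
  have hsub0 : C0 ⊆ Sset 0 1 := by
    rintro q ⟨ha, hb, hd⟩; exact ⟨ha, hb, by linarith⟩
  have hsub1 : C1 ⊆ Sset 0 1 := by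
    rintro q ⟨ha, hb, hd⟩; exact ⟨by linarith, hb, hd⟩
  have hsub2 : C2 ⊆ Sset 0 1 := by
    rintro q ⟨ha, hb, hd⟩
    simp only [Prod.fst_swap, Prod.snd_swap] at ha hb hd
    exact ⟨hb, by linarith, by linarith⟩
  have hint0 : ∫ p in Sset 0 1, C0.indicator f0 p = (r⁻¹)^2/2 - r^4*(r⁻¹)^6/6 := by
    rw [setIntegral_indicator hC0m, inter_eq_right.2 hsub0]
    exact int_C0 r⁻¹ r (le_of_lt hinv0)
  have hint1 : ∫ p in Sset 0 1, C1.indicator f1 p = (1-c)^2/2 - r^4*(1-c)^6/6 := by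
    rw [setIntegral_indicator hC1m, inter_eq_right.2 hsub1]
    exact int_C1 c r hc1
  have hint2 : ∫ p in Sset 0 1, C2.indicator f2 p = (1-c)^2/2 - r^4*(1-c)^6/6 := by
    rw [setIntegral_indicator hC2m, inter_eq_right.2 hsub2, hC2]
    have hswap : MeasurePreserving (Prod.swap : ℝ × ℝ → ℝ × ℝ)
        ((volume : Measure (ℝ × ℝ))) ((volume : Measure (ℝ × ℝ))) := by
      have h : MeasurePreserving (Prod.swap : ℝ × ℝ → ℝ × ℝ)
          ((volume : Measure ℝ).prod volume) ((volume : Measure ℝ).prod volume) :=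
        Measure.measurePreserving_swap
      rwa [← Measure.volume_eq_prod] at h
    exact (hswap.setIntegral_preimage_emb
      (MeasurableEquiv.prodComm (α := ℝ) (β := ℝ)).measurableEmbedding
      f1 (Sset c 1)).trans (int_C1 c r hc1)
  rw [hvol1, hint0, hint1, hint2]
  have h1c : 1 - c = r⁻¹ := by simp only [hcdef]; ring
  rw [h1c]
  have hr4 : r^4*(r⁻¹)^6 = (r^2)⁻¹ := by
    have hne : r ≠ 0 := ne_of_gt hr0
    field_simp
  have hr2 : (r⁻¹)^2 = (r^2)⁻¹ := (inv_pow r 2)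
  rw [hr4, hr2]
  ring


lemma jmax_measurable : Measurable (fun x => jmax y1 y2 y3 x) := by
  unfold jmax
  refine Measurable.ite ?_ measurable_const (Measurable.ite ?_ measurable_const measurable_const)
  · exact ((isClosed_le (bary_cont 1) (bary_cont 0)).inter
      (isClosed_le (bary_cont 2) (bary_cont 0))).measurableSet
  · exact (isClosed_le (bary_cont 2) (bary_cont 1)).measurableSet

lemma W_meas (r : ℝ) : MeasurableSet {q : (ℝ × ℝ) × (ℝ × ℝ) | q.2 ∈ N r q.1} := by
  have hrep : {q : (ℝ × ℝ) × (ℝ × ℝ) | q.2 ∈ N r q.1}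
      = ⋃ j : Fin 3, ({x | jmax y1 y2 y3 x = j} ×ˢ (univ : Set (ℝ × ℝ))) ∩
        {q : (ℝ × ℝ) × (ℝ × ℝ) | q.2 ∈ T ∧
          1 - bary y1 y2 y3 q.2 j ≤ r * (1 - bary y1 y2 y3 q.1 j)} := by
    ext q
    simp only [mem_iUnion, mem_inter_iff, Set.mem_prod, mem_univ, and_true, mem_setOf_eq]
    constructor
    · rintro ⟨hT, hineq⟩
      exact ⟨jmax y1 y2 y3 q.1, rfl, hT, hineq⟩
    · rintro ⟨j, hj, hT, hineq⟩
      refine ⟨hT, ?_⟩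
      rw [hj]
      exact hineq
  rw [hrep]
  refine MeasurableSet.iUnion fun j => MeasurableSet.inter ?_ ?_
  · exact (jmax_measurable (measurableSet_singleton j)).prod MeasurableSet.univ
  · refine IsClosed.measurableSet ?_
    exact (T_closed.preimage continuous_snd).inter (isClosed_le
      (continuous_const.sub ((bary_cont j).comp continuous_snd))
      (continuous_const.mul (continuous_const.sub ((bary_cont j).comp continuous_fst))))

/-- For `r ≥ 2`, `P({X₂, X₃} ⊂ N^r(X₁)) = 1 − 2 r⁻²`. -/
theorem prob_both_in_prox (r : ℝ) (hr : r ∈ Set.Ici (2 : ℝ)) :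
    ((Measure.pi fun _ : Fin 3 => unif T)
        {x | x 1 ∈ N r (x 0) ∧ x 2 ∈ N r (x 0)}).toReal =
      1 - 2 * (r ^ 2)⁻¹ := by
  have hr2 : (2:ℝ) ≤ r := hr
  have hr0 : (0:ℝ) < r := by linarith
  have hr1 : (1:ℝ) ≤ r := by linarith
  haveI : IsProbabilityMeasure (unif T) := unif_T_prob
  have hW : MeasurableSet {q : (ℝ × ℝ) × (ℝ × ℝ) | q.2 ∈ N r q.1} := W_meas r
  set B : Set ((ℝ × ℝ) × (Fin 2 → ℝ × ℝ)) :=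
    {p | p.2 0 ∈ N r p.1 ∧ p.2 1 ∈ N r p.1} with hBdef
  have hB : MeasurableSet B := by
    have h0 : Measurable fun p : (ℝ × ℝ) × (Fin 2 → ℝ × ℝ) => (p.1, p.2 0) :=
      measurable_fst.prodMk ((measurable_pi_apply 0).comp measurable_snd)
    have h1 : Measurable fun p : (ℝ × ℝ) × (Fin 2 → ℝ × ℝ) => (p.1, p.2 1) :=
      measurable_fst.prodMk ((measurable_pi_apply 1).comp measurable_snd)
    exact (h0 hW).inter (h1 hW)
  have hpre : {x : Fin 3 → ℝ × ℝ | x 1 ∈ N r (x 0) ∧ x 2 ∈ N r (x 0)}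
      = (MeasurableEquiv.piFinSuccAbove (fun _ : Fin 3 => ℝ × ℝ) 0) ⁻¹' B := by
    ext x
    simp [hBdef, MeasurableEquiv.piFinSuccAbove, Fin.succAbove]
    rfl
  rw [hpre,
    (measurePreserving_piFinSuccAbove (fun _ : Fin 3 => unif T) 0).measure_preimage
      hB.nullMeasurableSet,
    Measure.prod_apply hB]
  have hslice : ∀ x : ℝ × ℝ, (Measure.pi fun _ : Fin 2 => unif T) (Prod.mk x ⁻¹' B)
      = unif T (N r x) * unif T (N r x) := by
    intro x
    have hset : Prod.mk x ⁻¹' B = Set.pi univ (fun _ : Fin 2 => N r x) := by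
      ext y
      simp only [hBdef, mem_preimage, mem_setOf_eq, Set.mem_pi, mem_univ, true_implies]
      exact (Fin.forall_fin_two (p := fun i => y i ∈ N r x)).symm
    rw [hset, Measure.pi_pi, Fin.prod_univ_two]
  rw [lintegral_congr hslice]
  set gg : (ℝ × ℝ) → ℝ := fun x => min (r * (1 - Msup x)) 1 ^ 4 with hgg
  have hggnn : ∀ x, 0 ≤ gg x := fun x => by simp only [hgg]; positivity
  have hggcont : Continuous gg := by
    simp only [hgg]
    exact ((continuous_const.mul (continuous_const.sub Msup_cont)).min continuous_const).pow 4
  have hstep : ∫⁻ x, unif T (N r x) * unif T (N r x) ∂(unif T)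
      = (volume T)⁻¹ * ∫⁻ x in T, ENNReal.ofReal (gg x) := by
    calc ∫⁻ x, unif T (N r x) * unif T (N r x) ∂(unif T)
        = ∫⁻ x, unif T (N r x) * unif T (N r x) ∂((volume T)⁻¹ • volume.restrict T) := rfl
      _ = (volume T)⁻¹ * ∫⁻ x in T, unif T (N r x) * unif T (N r x) :=
          lintegral_smul_measure _ _
      _ = (volume T)⁻¹ * ∫⁻ x in T, ENNReal.ofReal (gg x) := by
          congr 1
          refine setLIntegral_congr_fun T_meas (fun x hx => ?_)
          rw [unif_N r hr1 x hx, ← ENNReal.ofReal_mul (by positivity)]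
          congr 1
          simp only [hgg]
          ring
  rw [hstep]
  have hTlint : ∫⁻ x in T, ENNReal.ofReal (gg x) = ENNReal.ofReal (∫ x in T, gg x) :=
    (ofReal_integral_eq_lintegral_ofReal
      (hggcont.continuousOn.integrableOn_compact T_compact)
      (Filter.Eventually.of_forall hggnn)).symm
  have hphiGG : ∀ p : ℝ × ℝ,
      gg (phi p) = min (r * (1 - ((1 - p.1 - p.2) ⊔ p.1 ⊔ p.2))) 1 ^ 4 := by
    intro p
    simp only [hgg, Msup]
    rw [bary0_eq, bary1_eq, bary2_eq, psi_phi]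
  have hDelta : ∫ p in Sset 0 1, gg (phi p) = 1/2 - (r^2)⁻¹ := by
    simp only [hphiGG]
    exact int_Delta r hr2
  have hTint : ∫ x in T, gg x = (s3/2) * (1/2 - (r^2)⁻¹) := by
    rw [integral_T_transfer gg hggcont, hDelta]
  rw [hTlint, hTint, vol_T]
  have hq : (r^2)⁻¹ ≤ (1:ℝ)/2 := by
    have h4 : (2:ℝ) ≤ r^2 := by nlinarith
    have := inv_anti₀ (by norm_num : (0:ℝ) < 2) h4
    simpa [one_div] using this
  have hnn : (0:ℝ) ≤ 1/2 - (r^2)⁻¹ := by linarith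
  rw [← ENNReal.ofReal_inv_of_pos (by positivity), ← ENNReal.ofReal_mul (by positivity),
    ENNReal.toReal_ofReal]
  · have hs3 : s3 ≠ 0 := s3_ne
    field_simp
    ring
  · have h1 : (0:ℝ) ≤ (s3/4)⁻¹ := by positivity
    have h2 : (0:ℝ) ≤ s3/2 * (1/2 - (r^2)⁻¹) := mul_nonneg (by positivity) hnn
    exact mul_nonneg h1 h2
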